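/- arXiv:2101.02198 — 2 statements merged into one kernel-verified Lean document; each statement's English description precedes it below -/
import Mathlib

section
/- (Variance of uniform client sampling) Suppose the learning rates satisfy η_t ≤ 2η_{t+E} for all t ≥ 0 and the stochastic gradients are uniformly bounded: E‖∇F_k(w,ξ)‖² ≤ H². Let t+1 be a communication step after E local SGD steps with learning rates at most η_t per step, let v̄_{t+1} = (1/N)Σ_{k=1}^N v_{t+1}^k be the average of all N clients' updated local models, and let ū_{t+1} = (1/K)Σ_{k∈S_t} v_{t+1}^k be the average over a subset S_t of K clients chosen uniformly at random without replacement from [N]. Then E[ū_{t+1}] = v̄_{t+1} and E‖v̄_{t+1} − ū_{t+1}‖² ≤ ((N−K)/(N−1)) · (4/K) · η_t² E² H². -/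
open MeasureTheory ProbabilityTheory Finset
open scoped ENNReal

/-- A (discrete) measurable-space structure on finsets of clients. -/
instance finsetFinMeasurableSpace (N : ℕ) : MeasurableSpace (Finset (Fin N)) := ⊤

lemma vcs_measurableSet {N : ℕ} (A : Set (Finset (Fin N))) : MeasurableSet A :=
  MeasurableSpace.measurableSet_top

lemma vcs_count_mem (N K : ℕ) (hK : 1 ≤ K) (i : Fin N) :
    (((univ : Finset (Fin N)).powersetCard K).filter (fun s => i ∈ s)).card
      = (N - 1).choose (K - 1) := by
  have h1 : ((univ : Finset (Fin N)).erase i).card = N - 1 := by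
    rw [card_erase_of_mem (mem_univ i), card_univ, Fintype.card_fin]
  have : (((univ : Finset (Fin N)).powersetCard K).filter (fun s => i ∈ s)).card
      = (((univ : Finset (Fin N)).erase i).powersetCard (K - 1)).card := by
    apply Finset.card_nbij' (fun s => s.erase i) (fun r => insert i r)
    · intro s hs
      simp only [Finset.mem_coe, mem_filter, Finset.mem_powersetCard] at hs
      obtain ⟨⟨hsub, hcard⟩, hi⟩ := hs
      simp only [Finset.mem_coe, Finset.mem_powersetCard]
      constructor
      · intro x hx
        rw [Finset.mem_erase] at hx ⊢
        exact ⟨hx.1, mem_univ x⟩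
      · rw [card_erase_of_mem hi, hcard]
    · intro r hr
      rw [Finset.mem_coe, Finset.mem_powersetCard] at hr
      obtain ⟨hsub, hcard⟩ := hr
      have hir : i ∉ r := fun h => (Finset.mem_erase.1 (hsub h)).1 rfl
      simp only [Finset.mem_coe, mem_filter, Finset.mem_powersetCard]
      refine ⟨⟨subset_univ _, ?_⟩, mem_insert_self i r⟩
      rw [Finset.card_insert_of_notMem hir, hcard]
      omega
    · intro s hs
      simp only [Finset.mem_coe, mem_filter] at hs
      exact Finset.insert_erase hs.2
    · intro r hr
      rw [Finset.mem_coe, Finset.mem_powersetCard] at hr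
      have hir : i ∉ r := fun h => (Finset.mem_erase.1 (hr.1 h)).1 rfl
      exact Finset.erase_insert hir
  rw [this, Finset.card_powersetCard, h1]

lemma vcs_count_pair (N K : ℕ) (hK : 1 ≤ K) {i j : Fin N} (hij : i ≠ j) :
    (((univ : Finset (Fin N)).powersetCard K).filter (fun s => i ∈ s ∧ j ∉ s)).card
      = (N - 2).choose (K - 1) := by
  have h2 : ((((univ : Finset (Fin N)).erase i).erase j)).card = N - 2 := by
    rw [card_erase_of_mem (Finset.mem_erase.2 ⟨hij.symm, mem_univ j⟩),
      card_erase_of_mem (mem_univ i), card_univ, Fintype.card_fin]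
    omega
  have : (((univ : Finset (Fin N)).powersetCard K).filter (fun s => i ∈ s ∧ j ∉ s)).card
      = (((((univ : Finset (Fin N)).erase i).erase j)).powersetCard (K - 1)).card := by
    apply Finset.card_nbij' (fun s => s.erase i) (fun r => insert i r)
    · intro s hs
      simp only [Finset.mem_coe, mem_filter, Finset.mem_powersetCard] at hs
      obtain ⟨⟨hsub, hcard⟩, hi, hj⟩ := hs
      simp only [Finset.mem_coe, Finset.mem_powersetCard]
      constructor
      · intro x hx
        rw [Finset.mem_erase] at hx
        rw [Finset.mem_erase, Finset.mem_erase]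
        exact ⟨fun h => hj (h ▸ hx.2), hx.1, mem_univ x⟩
      · rw [card_erase_of_mem hi, hcard]
    · intro r hr
      rw [Finset.mem_coe, Finset.mem_powersetCard] at hr
      obtain ⟨hsub, hcard⟩ := hr
      have hir : i ∉ r := fun h => (Finset.mem_erase.1 (Finset.mem_erase.1 (hsub h)).2).1 rfl
      have hjr : j ∉ r := fun h => (Finset.mem_erase.1 (hsub h)).1 rfl
      simp only [Finset.mem_coe, mem_filter, Finset.mem_powersetCard]
      refine ⟨⟨subset_univ _, ?_⟩, mem_insert_self i r, ?_⟩
      · rw [Finset.card_insert_of_notMem hir, hcard]; omega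
      · rw [Finset.mem_insert]
        push_neg
        exact ⟨hij.symm, hjr⟩
    · intro s hs
      simp only [Finset.mem_coe, mem_filter] at hs
      exact Finset.insert_erase hs.2.1
    · intro r hr
      rw [Finset.mem_coe, Finset.mem_powersetCard] at hr
      have hir : i ∉ r := fun h => (Finset.mem_erase.1 (Finset.mem_erase.1 (hr.1 h)).2).1 rfl
      exact Finset.erase_insert hir
  rw [this, Finset.card_powersetCard, h2]

lemma vcs_sum_powerset {V : Type*} [AddCommMonoid V] (N K : ℕ)
    (x : Fin N → V) :
    ∑ s ∈ (univ : Finset (Fin N)).powersetCard K, ∑ k ∈ s, x k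
      = ∑ k, (((univ : Finset (Fin N)).powersetCard K).filter (fun s => k ∈ s)).card • x k := by
  have h1 : ∀ s ∈ (univ : Finset (Fin N)).powersetCard K,
      ∑ k ∈ s, x k = ∑ k, if k ∈ s then x k else 0 := by
    intro s _
    rw [← Finset.sum_filter, Finset.filter_univ_mem]
  rw [Finset.sum_congr rfl h1, Finset.sum_comm]
  refine Finset.sum_congr rfl fun k _ => ?_
  rw [← Finset.sum_filter, Finset.sum_const]

lemma vcs_sum_powerset_norm_sq {V : Type*} [NormedAddCommGroup V] [InnerProductSpace ℝ V]
    (N K : ℕ) (x : Fin N → V) (hx : ∑ k, x k = 0)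
    (c3 : ℝ)
    (hcount : ∀ {i j : Fin N}, i ≠ j →
      ((((univ : Finset (Fin N)).powersetCard K).filter (fun s => i ∈ s ∧ j ∉ s)).card : ℝ) = c3) :
    ∑ s ∈ (univ : Finset (Fin N)).powersetCard K, ‖∑ k ∈ s, x k‖ ^ 2
      = c3 * ∑ k, ‖x k‖ ^ 2 := by
  set P := (univ : Finset (Fin N)).powersetCard K with hP
  set T : Fin N → Fin N → ℝ := fun i j => (inner ℝ (x i) (x j) : ℝ) with hT
  have key : ∀ s ∈ P, ‖∑ k ∈ s, x k‖ ^ 2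
      = -∑ i, ∑ j, (if i ∈ s ∧ j ∉ s then T i j else 0) := by
    intro s _
    have h := Finset.sum_sdiff (f := x) (Finset.subset_univ s)
    rw [hx] at h
    have hsplit : ∑ j ∈ univ \ s, x j = -∑ j ∈ s, x j := eq_neg_of_add_eq_zero_left h
    have h1 : ‖∑ k ∈ s, x k‖ ^ 2 = -∑ i ∈ s, ∑ j ∈ univ \ s, T i j := by
      rw [← real_inner_self_eq_norm_sq]
      have h2 : (inner ℝ (∑ k ∈ s, x k) (∑ j ∈ univ \ s, x j) : ℝ)
          = ∑ i ∈ s, ∑ j ∈ univ \ s, T i j := by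
        rw [sum_inner]
        exact Finset.sum_congr rfl fun i _ => inner_sum _ _ _
      rw [← h2, hsplit, inner_neg_right, neg_neg]
    rw [h1]
    congr 1
    have h2 : ∀ i, (∑ j, if i ∈ s ∧ j ∉ s then T i j else 0)
        = if i ∈ s then ∑ j ∈ univ \ s, T i j else 0 := by
      intro i
      by_cases hi : i ∈ s
      · simp only [hi, true_and, if_true]
        rw [← Finset.sum_filter, Finset.filter_not, Finset.filter_univ_mem]
      · simp [hi]
    rw [Finset.sum_congr rfl fun i _ => h2 i, ← Finset.sum_filter, Finset.filter_univ_mem]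
  rw [Finset.sum_congr rfl key, Finset.sum_neg_distrib]
  have hswap : ∑ s ∈ P, ∑ i, ∑ j, (if i ∈ s ∧ j ∉ s then T i j else 0)
      = ∑ i, ∑ j, ∑ s ∈ P, (if i ∈ s ∧ j ∉ s then T i j else 0) := by
    rw [Finset.sum_comm]
    exact Finset.sum_congr rfl fun i _ => Finset.sum_comm
  rw [hswap]
  have hinner : ∀ i j : Fin N, ∑ s ∈ P, (if i ∈ s ∧ j ∉ s then T i j else 0)
      = (if i = j then 0 else c3) * T i j := by
    intro i j
    rw [← Finset.sum_filter, Finset.sum_const, nsmul_eq_mul]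
    by_cases h : i = j
    · subst h
      rw [Finset.filter_false_of_mem (fun s _ hs => hs.2 hs.1)]
      simp
    · rw [hcount h]
      simp [h]
  have hdiag : ∀ i : Fin N, ∑ j, (if i = j then 0 else c3) * T i j
      = c3 * (∑ j, T i j) - c3 * T i i := by
    intro i
    have h3 : ∀ j, (if i = j then 0 else c3) * T i j
        = c3 * T i j - (if i = j then c3 * T i j else 0) := by
      intro j; by_cases h : i = j <;> simp [h]
    rw [Finset.sum_congr rfl fun j _ => h3 j, Finset.sum_sub_distrib, ← Finset.mul_sum,
      Fintype.sum_ite_eq]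
  have hTT : ∑ i, ∑ j, T i j = 0 := by
    have h4 : ∑ i, ∑ j, T i j = (inner ℝ (∑ i, x i) (∑ j, x j) : ℝ) := by
      rw [sum_inner]
      exact Finset.sum_congr rfl fun i _ => (inner_sum _ _ _).symm
    rw [h4, hx, inner_zero_left]
  have hdd : ∀ i : Fin N, T i i = ‖x i‖ ^ 2 := fun i => real_inner_self_eq_norm_sq (x i)
  simp only [hinner, hdiag]
  have hfin : ∑ i, (c3 * ∑ j, T i j - c3 * T i i)
      = c3 * (∑ i, ∑ j, T i j) - c3 * ∑ i, T i i := by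
    rw [Finset.sum_sub_distrib, ← Finset.mul_sum, ← Finset.mul_sum]
  rw [hfin, hTT, Finset.sum_congr rfl fun i _ => hdd i]
  ring

lemma vcs_mean_min {V : Type*} [NormedAddCommGroup V] [InnerProductSpace ℝ V]
    (N : ℕ) (hN : 0 < N) (z : Fin N → V) :
    ∑ k, ‖(N : ℝ)⁻¹ • ∑ j, z j - z k‖ ^ 2 ≤ ∑ k, ‖z k‖ ^ 2 := by
  set m := (N : ℝ)⁻¹ • ∑ j, z j with hm
  have hNne : (N : ℝ) ≠ 0 := Nat.cast_ne_zero.2 hN.ne'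
  have hsum : ∑ j, z j = (N : ℝ) • m := by
    rw [hm, smul_smul, mul_inv_cancel₀ hNne, one_smul]
  have expand : ∀ k : Fin N, ‖m - z k‖ ^ 2
      = ‖m‖ ^ 2 - 2 * (inner ℝ m (z k) : ℝ) + ‖z k‖ ^ 2 := fun k => norm_sub_sq_real m (z k)
  have step : ∑ k, ‖m - z k‖ ^ 2 = (∑ k, ‖z k‖ ^ 2) - (N : ℝ) * ‖m‖ ^ 2 := by
    rw [Finset.sum_congr rfl fun k _ => expand k, Finset.sum_add_distrib,
      Finset.sum_sub_distrib, Finset.sum_const, ← Finset.mul_sum, ← inner_sum, hsum,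
      real_inner_smul_right, real_inner_self_eq_norm_sq, card_univ, Fintype.card_fin,
      nsmul_eq_mul]
    ring
  rw [step]
  have : 0 ≤ (N : ℝ) * ‖m‖ ^ 2 := by positivity
  linarith

lemma vcs_integral_comp {N K : ℕ} {Ωs : Type} [MeasurableSpace Ωs] (Ps : Measure Ωs)
    [IsProbabilityMeasure Ps] (S : Ωs → Finset (Fin N)) (hSmeas : Measurable S)
    (hcard : ∀ ωs, (S ωs).card = K)
    (hunif : ∀ s : Finset (Fin N), s.card = K →
      Ps {ωs | S ωs = s} = ((N.choose K : ℝ≥0∞))⁻¹)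
    {V : Type*} [NormedAddCommGroup V] [NormedSpace ℝ V] [CompleteSpace V]
    (φ : Finset (Fin N) → V) :
    ∫ ωs, φ (S ωs) ∂Ps
      = ∑ s ∈ (univ : Finset (Fin N)).powersetCard K, ((N.choose K : ℝ))⁻¹ • φ s := by
  classical
  have hrep : ∀ ωs, φ (S ωs) = ∑ s : Finset (Fin N), if S ωs = s then φ s else 0 := by
    intro ωs
    rw [Finset.sum_ite_eq, if_pos (mem_univ _)]
  have hind : ∀ s : Finset (Fin N), (fun ωs => if S ωs = s then φ s else 0)
      = (S ⁻¹' {s}).indicator (fun _ => φ s) := by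
    intro s
    funext ωs
    by_cases h : S ωs = s <;> simp [Set.indicator_apply, Set.mem_preimage, h]
  have hintS : ∀ s : Finset (Fin N),
      Integrable (fun ωs => if S ωs = s then φ s else 0) Ps := by
    intro s
    rw [hind s]
    exact (integrable_const (φ s)).indicator (hSmeas (vcs_measurableSet _))
  calc ∫ ωs, φ (S ωs) ∂Ps
      = ∫ ωs, ∑ s : Finset (Fin N), (if S ωs = s then φ s else 0) ∂Ps := by
        simp_rw [← hrep]
    _ = ∑ s : Finset (Fin N), ∫ ωs, (if S ωs = s then φ s else 0) ∂Ps :=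
        integral_finset_sum _ fun s _ => hintS s
    _ = ∑ s : Finset (Fin N), (Ps (S ⁻¹' {s})).toReal • φ s := by
        refine Finset.sum_congr rfl fun s _ => ?_
        rw [hind s, integral_indicator_const _ (hSmeas (vcs_measurableSet _)), measureReal_def]
    _ = ∑ s ∈ (univ : Finset (Fin N)).powersetCard K, (Ps (S ⁻¹' {s})).toReal • φ s := by
        refine (Finset.sum_subset (Finset.subset_univ _) fun s _ hs => ?_).symm
        have hcs : s.card ≠ K := by
          intro h
          exact hs (Finset.mem_powersetCard.2 ⟨Finset.subset_univ s, h⟩)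
        have : S ⁻¹' {s} = ∅ := by
          ext ωs
          simp only [Set.mem_preimage, Set.mem_singleton_iff, Set.mem_empty_iff_false,
            iff_false]
          intro h
          exact hcs (h ▸ hcard ωs)
        rw [this]
        simp
    _ = ∑ s ∈ (univ : Finset (Fin N)).powersetCard K, ((N.choose K : ℝ))⁻¹ • φ s := by
        refine Finset.sum_congr rfl fun s hs => ?_
        have hcs : s.card = K := (Finset.mem_powersetCard.1 hs).2
        have hpre : S ⁻¹' {s} = {ωs | S ωs = s} := by
          ext ωs; simp [Set.mem_preimage]
        rw [hpre, hunif s hcs, ENNReal.toReal_inv]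
        norm_num

lemma vcs_per_client {d : ℕ} {Ωg : Type} [MeasurableSpace Ωg] (Pg : Measure Ωg)
    [IsProbabilityMeasure Pg] (Epo t : ℕ) (hEpo : 1 ≤ Epo) (htE : Epo ≤ t + 1)
    (eta : ℕ → ℝ) (hmono : Antitone eta) (hpos : ∀ τ, 0 ≤ eta τ)
    (h2eta : ∀ τ, eta τ ≤ 2 * eta (τ + Epo)) (H : ℝ)
    (G : ℕ → Ωg → EuclideanSpace ℝ (Fin d)) (hmemG : ∀ τ, MemLp (G τ) 2 Pg)
    (hbdG : ∀ τ, ∫ ωg, ‖G τ ωg‖ ^ 2 ∂Pg ≤ H ^ 2) :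
    ∫ ωg, ‖∑ τ ∈ Finset.Icc (t + 1 - Epo) t, eta τ • G τ ωg‖ ^ 2 ∂Pg
      ≤ 4 * eta t ^ 2 * (Epo : ℝ) ^ 2 * H ^ 2 := by
  set I := Finset.Icc (t + 1 - Epo) t with hI
  have hIcc : I.card = Epo := by rw [hI, Nat.card_Icc]; omega
  have heta : ∀ τ ∈ I, eta τ ≤ 2 * eta t := by
    intro τ hτ
    rw [hI, Finset.mem_Icc] at hτ
    have h1 : eta τ ≤ eta (t + 1 - Epo) := hmono hτ.1
    have h2 : eta (t + 1 - Epo) ≤ 2 * eta (t + 1 - Epo + Epo) := h2eta _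
    have h3 : t + 1 - Epo + Epo = t + 1 := by omega
    have h4 : eta (t + 1) ≤ eta t := hmono (Nat.le_succ t)
    rw [h3] at h2
    linarith
  have hpt : ∀ ωg, ‖∑ τ ∈ I, eta τ • G τ ωg‖ ^ 2
      ≤ ∑ τ ∈ I, (Epo : ℝ) * (4 * eta t ^ 2 * ‖G τ ωg‖ ^ 2) := by
    intro ωg
    have h1 : ‖∑ τ ∈ I, eta τ • G τ ωg‖ ^ 2 ≤ (∑ τ ∈ I, ‖eta τ • G τ ωg‖) ^ 2 := by
      have := norm_sum_le I (fun τ => eta τ • G τ ωg)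
      exact pow_le_pow_left₀ (norm_nonneg _) this 2
    have h2 : (∑ τ ∈ I, ‖eta τ • G τ ωg‖) ^ 2
        ≤ (I.card : ℝ) * ∑ τ ∈ I, ‖eta τ • G τ ωg‖ ^ 2 := by
      exact_mod_cast sq_sum_le_card_mul_sum_sq (s := I) (f := fun τ => ‖eta τ • G τ ωg‖)
    have h3 : ∀ τ ∈ I, ‖eta τ • G τ ωg‖ ^ 2 ≤ 4 * eta t ^ 2 * ‖G τ ωg‖ ^ 2 := by
      intro τ hτ
      rw [norm_smul, mul_pow, Real.norm_eq_abs, sq_abs]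
      have h5 : eta τ ^ 2 ≤ (2 * eta t) ^ 2 :=
        pow_le_pow_left₀ (hpos τ) (heta τ hτ) 2
      have h6 : (0:ℝ) ≤ ‖G τ ωg‖ ^ 2 := by positivity
      nlinarith
    calc ‖∑ τ ∈ I, eta τ • G τ ωg‖ ^ 2
        ≤ (I.card : ℝ) * ∑ τ ∈ I, ‖eta τ • G τ ωg‖ ^ 2 := h1.trans h2
      _ ≤ (I.card : ℝ) * ∑ τ ∈ I, 4 * eta t ^ 2 * ‖G τ ωg‖ ^ 2 := by
          refine mul_le_mul_of_nonneg_left (Finset.sum_le_sum h3) (by positivity)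
      _ = ∑ τ ∈ I, (Epo : ℝ) * (4 * eta t ^ 2 * ‖G τ ωg‖ ^ 2) := by
          rw [Finset.mul_sum, hIcc]
  have hint1 : Integrable (fun ωg => ‖∑ τ ∈ I, eta τ • G τ ωg‖ ^ 2) Pg := by
    have hm := memLp_finset_sum' I fun τ _ => (hmemG τ).const_smul (eta τ)
    have heq : (∑ τ ∈ I, eta τ • G τ) = fun ωg => ∑ τ ∈ I, eta τ • G τ ωg := by
      funext ωg; simp
    rw [heq] at hm
    exact hm.norm.integrable_sq
  have hint2 : ∀ τ, Integrable (fun ωg => ‖G τ ωg‖ ^ 2) Pg := fun τ =>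
    (hmemG τ).norm.integrable_sq
  have hint3 : Integrable (fun ωg => ∑ τ ∈ I, (Epo : ℝ) * (4 * eta t ^ 2 * ‖G τ ωg‖ ^ 2)) Pg :=
    integrable_finset_sum I fun τ _ => ((hint2 τ).const_mul _).const_mul _
  calc ∫ ωg, ‖∑ τ ∈ I, eta τ • G τ ωg‖ ^ 2 ∂Pg
      ≤ ∫ ωg, ∑ τ ∈ I, (Epo : ℝ) * (4 * eta t ^ 2 * ‖G τ ωg‖ ^ 2) ∂Pg :=
        integral_mono hint1 hint3 hpt
    _ = ∑ τ ∈ I, (Epo : ℝ) * (4 * eta t ^ 2 * ∫ ωg, ‖G τ ωg‖ ^ 2 ∂Pg) := by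
        rw [integral_finset_sum I fun τ _ => ((hint2 τ).const_mul _).const_mul _]
        refine Finset.sum_congr rfl fun τ _ => ?_
        rw [integral_const_mul, integral_const_mul]
    _ ≤ ∑ τ ∈ I, (Epo : ℝ) * (4 * eta t ^ 2 * H ^ 2) := by
        refine Finset.sum_le_sum fun τ _ => ?_
        gcongr
        exact hbdG τ
    _ = 4 * eta t ^ 2 * (Epo : ℝ) ^ 2 * H ^ 2 := by
        rw [Finset.sum_const, hIcc, nsmul_eq_mul]
        ring

/-- **Variance of uniform client sampling.**
Each of the `N` clients starts round `t` from a common (random) point `w₀` and performs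
`E` local SGD steps `v ← v − η_τ g_τ` with nonnegative, non-increasing learning rates
satisfying `η_τ ≤ 2 η_{τ+E}`, where the stochastic gradients satisfy `E‖g‖² ≤ H²`;
`v_{t+1}^k` is client `k`'s model after the `E` steps ending at step `t+1`.  The subset
`S` of `K` clients is drawn uniformly at random without replacement, independently of the
SGD sampling (modeled by the product space `Ωs × Ωg`).  Then the sampled average
`ū_{t+1} = (1/K)∑_{k∈S} v_{t+1}^k` satisfies `E[ū_{t+1}] = v̄_{t+1}` (expectation over
the sampling) and `E‖v̄_{t+1} − ū_{t+1}‖² ≤ ((N−K)/(N−1)) (4/K) η_t² E² H²`. -/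
theorem variance_of_uniform_client_sampling
    (d N K Epo : ℕ) (hN : 0 < N) (hK : 1 ≤ K) (hKN : K ≤ N) (hEpo : 1 ≤ Epo)
    (H : ℝ) (t : ℕ) (htE : Epo ≤ t + 1)
    (eta : ℕ → ℝ) (hmono : Antitone eta) (hpos : ∀ τ, 0 ≤ eta τ)
    (h2eta : ∀ τ, eta τ ≤ 2 * eta (τ + Epo))
    (Ωs Ωg : Type) [MeasurableSpace Ωs] [MeasurableSpace Ωg]
    (Ps : Measure Ωs) (Pg : Measure Ωg)
    [IsProbabilityMeasure Ps] [IsProbabilityMeasure Pg]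
    (w0 : Ωg → EuclideanSpace ℝ (Fin d))
    (g : Fin N → ℕ → Ωg → EuclideanSpace ℝ (Fin d))
    (v : Fin N → Ωg → EuclideanSpace ℝ (Fin d))
    (hv : ∀ k, v k = fun ωg =>
      w0 ωg - ∑ τ ∈ Finset.Icc (t + 1 - Epo) t, eta τ • g k τ ωg)
    (hbd : ∀ k τ, ∫ ωg, ‖g k τ ωg‖ ^ 2 ∂Pg ≤ H ^ 2)
    (hmemg : ∀ k τ, MemLp (g k τ) 2 Pg) (hmem0 : MemLp w0 2 Pg)
    (S : Ωs → Finset (Fin N)) (hSmeas : Measurable S)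
    (hcard : ∀ ωs, (S ωs).card = K)
    (hunif : ∀ s : Finset (Fin N), s.card = K →
      Ps {ωs | S ωs = s} = ((N.choose K : ℝ≥0∞))⁻¹) :
    (∀ ωg, ∫ ωs, (K : ℝ)⁻¹ • ∑ k ∈ S ωs, v k ωg ∂Ps = (N : ℝ)⁻¹ • ∑ k, v k ωg) ∧
      ∫ ω, ‖(N : ℝ)⁻¹ • ∑ k, v k ω.2 - (K : ℝ)⁻¹ • ∑ k ∈ S ω.1, v k ω.2‖ ^ 2
          ∂(Ps.prod Pg)
        ≤ ((N : ℝ) - K) / ((N : ℝ) - 1) * (4 / K) * (eta t) ^ 2 * (Epo : ℝ) ^ 2 * H ^ 2 := by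
  classical
  have hNne : (N : ℝ) ≠ 0 := Nat.cast_ne_zero.2 hN.ne'
  have hKne : (K : ℝ) ≠ 0 := Nat.cast_ne_zero.2 (by omega)
  have hchpos : 0 < N.choose K := Nat.choose_pos hKN
  have hchne : (N.choose K : ℝ) ≠ 0 := Nat.cast_ne_zero.2 hchpos.ne'
  -- part 1
  have hnat1 : N * (N - 1).choose (K - 1) = N.choose K * K := by
    have h := Nat.add_one_mul_choose_eq (N - 1) (K - 1)
    have e1 : N - 1 + 1 = N := by omega
    have e2 : K - 1 + 1 = K := by omega
    rw [e1, e2] at h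
    exact h
  have part1 : ∀ ωg, ∫ ωs, (K : ℝ)⁻¹ • ∑ k ∈ S ωs, v k ωg ∂Ps
      = (N : ℝ)⁻¹ • ∑ k, v k ωg := by
    intro ωg
    rw [vcs_integral_comp Ps S hSmeas hcard hunif (fun s => (K : ℝ)⁻¹ • ∑ k ∈ s, v k ωg)]
    rw [← Finset.smul_sum, ← Finset.smul_sum, vcs_sum_powerset N K (fun k => v k ωg),
      Finset.sum_congr rfl fun k _ => by rw [vcs_count_mem N K hK k],
      ← Finset.smul_sum, ← Nat.cast_smul_eq_nsmul ℝ, smul_smul, smul_smul]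
    congr 1
    have hr1 : (N : ℝ) * ((N - 1).choose (K - 1) : ℝ) = (N.choose K : ℝ) * K := by
      exact_mod_cast hnat1
    field_simp
    linear_combination hr1
  refine ⟨part1, ?_⟩
  -- part 2
  by_cases hN1 : N = 1
  · subst hN1
    have hK1 : K = 1 := by omega
    subst hK1
    have hSu : ∀ ωs, S ωs = (univ : Finset (Fin 1)) := by
      intro ωs
      apply Finset.eq_univ_of_card
      rw [hcard ωs]
      simp
    simp_rw [hSu]
    norm_num
  · have hN2 : 2 ≤ N := by omega
    have hN1R : (1:ℝ) ≤ (N:ℝ) - 1 := by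
      have : (2:ℝ) ≤ (N:ℝ) := by exact_mod_cast hN2
      linarith
    have hN1ne : (N:ℝ) - 1 ≠ 0 := by linarith
    set I := Finset.Icc (t + 1 - Epo) t with hI
    set P := (univ : Finset (Fin N)).powersetCard K with hP
    set F : Finset (Fin N) → Ωg → ℝ := fun s ωg =>
      ‖(N : ℝ)⁻¹ • ∑ k, v k ωg - (K : ℝ)⁻¹ • ∑ k ∈ s, v k ωg‖ ^ 2 with hF
    set c3 : ℝ := ((N - 2).choose (K - 1) : ℝ) with hc3
    have hc3nn : 0 ≤ c3 := by positivity
    -- MemLp facts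
    have hmemv : ∀ k, MemLp (v k) 2 Pg := by
      intro k
      rw [hv k]
      have hs := memLp_finset_sum' I fun τ _ => (hmemg k τ).const_smul (eta τ)
      have heq : (∑ τ ∈ I, eta τ • g k τ) = fun ωg => ∑ τ ∈ I, eta τ • g k τ ωg := by
        funext ωg; simp
      rw [heq] at hs
      exact hmem0.sub hs
    have hmemA : MemLp (fun ωg => (N : ℝ)⁻¹ • ∑ k, v k ωg) 2 Pg := by
      have hs := memLp_finset_sum' univ fun k _ => hmemv k
      have heq : (∑ k, v k) = fun ωg => ∑ k, v k ωg := by funext ωg; simp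
      rw [heq] at hs
      exact hs.const_smul ((N : ℝ)⁻¹)
    have hmemB : ∀ s : Finset (Fin N),
        MemLp (fun ωg => (K : ℝ)⁻¹ • ∑ k ∈ s, v k ωg) 2 Pg := by
      intro s
      have hs := memLp_finset_sum' s fun k _ => hmemv k
      have heq : (∑ k ∈ s, v k) = fun ωg => ∑ k ∈ s, v k ωg := by funext ωg; simp
      rw [heq] at hs
      exact hs.const_smul ((K : ℝ)⁻¹)
    have hintF : ∀ s : Finset (Fin N), Integrable (F s) Pg := by
      intro s
      exact (hmemA.sub (hmemB s)).norm.integrable_sq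
    have hintVW : ∀ k : Fin N, Integrable (fun ωg => ‖v k ωg - w0 ωg‖ ^ 2) Pg := fun k =>
      ((hmemv k).sub hmem0).norm.integrable_sq
    -- decompose the product integral
    have hindS : ∀ s : Finset (Fin N),
        Integrable (fun ωs => if S ωs = s then (1:ℝ) else 0) Ps := by
      intro s
      have heq : (fun ωs => if S ωs = s then (1:ℝ) else 0)
          = (S ⁻¹' {s}).indicator (fun _ => (1:ℝ)) := by
        funext ωs
        by_cases h : S ωs = s <;> simp [Set.indicator_apply, h]
      rw [heq]
      exact (integrable_const 1).indicator (hSmeas (vcs_measurableSet _))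
    have hdecomp : ∫ ω, F (S ω.1) ω.2 ∂(Ps.prod Pg)
        = ∑ s ∈ P, (N.choose K : ℝ)⁻¹ * ∫ ωg, F s ωg ∂Pg := by
      have hrep : ∀ ω : Ωs × Ωg, F (S ω.1) ω.2
          = ∑ s : Finset (Fin N), (if S ω.1 = s then (1:ℝ) else 0) * F s ω.2 := by
        intro ω
        simp only [ite_mul, one_mul, zero_mul, Finset.sum_ite_eq, mem_univ, if_true]
      calc ∫ ω, F (S ω.1) ω.2 ∂(Ps.prod Pg)
          = ∫ ω, ∑ s : Finset (Fin N), (if S ω.1 = s then (1:ℝ) else 0) * F s ω.2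
              ∂(Ps.prod Pg) := by
            simp_rw [← hrep]
        _ = ∑ s : Finset (Fin N),
              ∫ ω, (if S ω.1 = s then (1:ℝ) else 0) * F s ω.2 ∂(Ps.prod Pg) :=
            integral_finset_sum _ fun s _ => (hindS s).mul_prod (hintF s)
        _ = ∑ s : Finset (Fin N),
              (∫ ωs, (if S ωs = s then (1:ℝ) else 0) ∂Ps) * ∫ ωg, F s ωg ∂Pg :=
            Finset.sum_congr rfl fun s _ =>
              integral_prod_mul (μ := Ps) (ν := Pg) (fun ωs => if S ωs = s then (1:ℝ) else 0) (F s)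
        _ = ∑ s : Finset (Fin N), (Ps (S ⁻¹' {s})).toReal * ∫ ωg, F s ωg ∂Pg := by
            refine Finset.sum_congr rfl fun s _ => ?_
            have heq : (fun ωs => if S ωs = s then (1:ℝ) else 0)
                = (S ⁻¹' {s}).indicator (fun _ => (1:ℝ)) := by
              funext ωs
              by_cases h : S ωs = s <;> simp [Set.indicator_apply, h]
            rw [heq, integral_indicator_const _ (hSmeas (vcs_measurableSet _)),
              smul_eq_mul, mul_one, measureReal_def]
        _ = ∑ s ∈ P, (Ps (S ⁻¹' {s})).toReal * ∫ ωg, F s ωg ∂Pg := by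
            refine (Finset.sum_subset (Finset.subset_univ _) fun s _ hs => ?_).symm
            have hcs : s.card ≠ K := by
              intro h
              exact hs (Finset.mem_powersetCard.2 ⟨Finset.subset_univ s, h⟩)
            have hempty : S ⁻¹' {s} = ∅ := by
              ext ωs
              simp only [Set.mem_preimage, Set.mem_singleton_iff, Set.mem_empty_iff_false,
                iff_false]
              intro h
              exact hcs (h ▸ hcard ωs)
            rw [hempty]
            simp
        _ = ∑ s ∈ P, (N.choose K : ℝ)⁻¹ * ∫ ωg, F s ωg ∂Pg := by
            refine Finset.sum_congr rfl fun s hs => ?_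
            have hcs : s.card = K := (Finset.mem_powersetCard.1 hs).2
            have hpre : S ⁻¹' {s} = {ωs | S ωs = s} := by
              ext ωs; simp [Set.mem_preimage]
            rw [hpre, hunif s hcs, ENNReal.toReal_inv]
            norm_num
    -- pointwise bound on the sum over subsets
    have hpt : ∀ ωg, ∑ s ∈ P, F s ωg
        ≤ (((K : ℝ)⁻¹) ^ 2 * c3) * ∑ k, ‖v k ωg - w0 ωg‖ ^ 2 := by
      intro ωg
      set x : Fin N → EuclideanSpace ℝ (Fin d) :=
        fun k => (N : ℝ)⁻¹ • ∑ j, v j ωg - v k ωg with hx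
      have hxsum : ∑ k, x k = 0 := by
        rw [Finset.sum_sub_distrib, Finset.sum_const, card_univ, Fintype.card_fin,
          ← Nat.cast_smul_eq_nsmul ℝ, smul_smul, mul_inv_cancel₀ hNne, one_smul, sub_self]
      have hFs : ∀ s ∈ P, F s ωg = ((K : ℝ)⁻¹) ^ 2 * ‖∑ k ∈ s, x k‖ ^ 2 := by
        intro s hs
        have hcs : s.card = K := (Finset.mem_powersetCard.1 hs).2
        have hsm : (K : ℝ)⁻¹ • ∑ k ∈ s, x k
            = (N : ℝ)⁻¹ • ∑ k, v k ωg - (K : ℝ)⁻¹ • ∑ k ∈ s, v k ωg := by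
          rw [hx]
          rw [Finset.sum_sub_distrib, Finset.sum_const, hcs, smul_sub,
            ← Nat.cast_smul_eq_nsmul ℝ, smul_smul, inv_mul_cancel₀ hKne, one_smul]
        simp only [hF]
        rw [← hsm, norm_smul, mul_pow, Real.norm_eq_abs, sq_abs]
      have hsum2 : ∑ s ∈ P, ‖∑ k ∈ s, x k‖ ^ 2 = c3 * ∑ k, ‖x k‖ ^ 2 := by
        refine vcs_sum_powerset_norm_sq N K x hxsum c3 ?_
        intro i j hij
        rw [vcs_count_pair N K hK hij]
      have hmm : ∑ k, ‖x k‖ ^ 2 ≤ ∑ k, ‖v k ωg - w0 ωg‖ ^ 2 := by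
        have hzid : ∀ k : Fin N, x k
            = (N : ℝ)⁻¹ • (∑ j, (v j ωg - w0 ωg)) - (v k ωg - w0 ωg) := by
          intro k
          rw [Finset.sum_sub_distrib, Finset.sum_const, card_univ, Fintype.card_fin,
            smul_sub, ← Nat.cast_smul_eq_nsmul ℝ, smul_smul, inv_mul_cancel₀ hNne,
            one_smul, hx]
          module
        calc ∑ k, ‖x k‖ ^ 2
            = ∑ k, ‖(N : ℝ)⁻¹ • (∑ j, (v j ωg - w0 ωg)) - (v k ωg - w0 ωg)‖ ^ 2 :=
              Finset.sum_congr rfl fun k _ => by rw [hzid k]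
          _ ≤ ∑ k, ‖v k ωg - w0 ωg‖ ^ 2 := vcs_mean_min N hN (fun j => v j ωg - w0 ωg)
      calc ∑ s ∈ P, F s ωg
          = ((K : ℝ)⁻¹) ^ 2 * (c3 * ∑ k, ‖x k‖ ^ 2) := by
            rw [Finset.sum_congr rfl hFs, ← Finset.mul_sum, hsum2]
        _ ≤ ((K : ℝ)⁻¹) ^ 2 * (c3 * ∑ k, ‖v k ωg - w0 ωg‖ ^ 2) := by
            refine mul_le_mul_of_nonneg_left ?_ (by positivity)
            exact mul_le_mul_of_nonneg_left hmm hc3nn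
        _ = (((K : ℝ)⁻¹) ^ 2 * c3) * ∑ k, ‖v k ωg - w0 ωg‖ ^ 2 := by ring
    -- integrate the bound
    have hintSumF : Integrable (fun ωg => ∑ s ∈ P, F s ωg) Pg :=
      integrable_finset_sum P fun s _ => hintF s
    have hintRHS : Integrable
        (fun ωg => (((K : ℝ)⁻¹) ^ 2 * c3) * ∑ k, ‖v k ωg - w0 ωg‖ ^ 2) Pg :=
      (integrable_finset_sum univ fun k _ => hintVW k).const_mul _
    have hper : ∀ k : Fin N, ∫ ωg, ‖v k ωg - w0 ωg‖ ^ 2 ∂Pg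
        ≤ 4 * eta t ^ 2 * (Epo : ℝ) ^ 2 * H ^ 2 := by
      intro k
      have hvk : (fun ωg => ‖v k ωg - w0 ωg‖ ^ 2)
          = fun ωg => ‖∑ τ ∈ I, eta τ • g k τ ωg‖ ^ 2 := by
        funext ωg
        simp only [hv k]
        rw [sub_sub_cancel_left, norm_neg]
      rw [hvk]
      exact vcs_per_client Pg Epo t hEpo htE eta hmono hpos h2eta H (g k)
        (hmemg k) (hbd k)
    have hsumper : ∑ k : Fin N, ∫ ωg, ‖v k ωg - w0 ωg‖ ^ 2 ∂Pg
        ≤ (N : ℝ) * (4 * eta t ^ 2 * (Epo : ℝ) ^ 2 * H ^ 2) := by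
      calc ∑ k : Fin N, ∫ ωg, ‖v k ωg - w0 ωg‖ ^ 2 ∂Pg
          ≤ ∑ _k : Fin N, 4 * eta t ^ 2 * (Epo : ℝ) ^ 2 * H ^ 2 :=
            Finset.sum_le_sum fun k _ => hper k
        _ = (N : ℝ) * (4 * eta t ^ 2 * (Epo : ℝ) ^ 2 * H ^ 2) := by
            rw [Finset.sum_const, card_univ, Fintype.card_fin, nsmul_eq_mul]
    have hIF : ∫ ωg, ∑ s ∈ P, F s ωg ∂Pg
        ≤ (((K : ℝ)⁻¹) ^ 2 * c3) * ((N : ℝ) * (4 * eta t ^ 2 * (Epo : ℝ) ^ 2 * H ^ 2)) := by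
      calc ∫ ωg, ∑ s ∈ P, F s ωg ∂Pg
          ≤ ∫ ωg, (((K : ℝ)⁻¹) ^ 2 * c3) * ∑ k, ‖v k ωg - w0 ωg‖ ^ 2 ∂Pg :=
            integral_mono hintSumF hintRHS hpt
        _ = (((K : ℝ)⁻¹) ^ 2 * c3) * ∑ k : Fin N, ∫ ωg, ‖v k ωg - w0 ωg‖ ^ 2 ∂Pg := by
            rw [integral_const_mul, integral_finset_sum univ fun k _ => hintVW k]
        _ ≤ (((K : ℝ)⁻¹) ^ 2 * c3) * ((N : ℝ) * (4 * eta t ^ 2 * (Epo : ℝ) ^ 2 * H ^ 2)) := by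
            refine mul_le_mul_of_nonneg_left hsumper (by positivity)
    -- the combinatorial constant
    have hnat2 : (N - 1) * (N - 2).choose (K - 1) = (N - 1).choose (K - 1) * (N - K) := by
      have ha := Nat.add_one_mul_choose_eq (N - 2) (K - 1)
      have hb := Nat.choose_succ_right_eq (N - 1) (K - 1)
      have e1 : N - 2 + 1 = N - 1 := by omega
      have e2 : K - 1 + 1 = K := by omega
      have e3 : N - 1 - (K - 1) = N - K := by omega
      rw [e1, e2] at ha
      rw [e2, e3] at hb
      rw [ha, hb]
    have hr1 : (N : ℝ) * ((N - 1).choose (K - 1) : ℝ) = (N.choose K : ℝ) * K := by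
      exact_mod_cast hnat1
    have hr2 : ((N : ℝ) - 1) * c3 = ((N - 1).choose (K - 1) : ℝ) * ((N : ℝ) - K) := by
      have h : (((N - 1) * (N - 2).choose (K - 1) : ℕ) : ℝ)
          = (((N - 1).choose (K - 1) * (N - K) : ℕ) : ℝ) := by exact_mod_cast hnat2
      rw [Nat.cast_mul, Nat.cast_mul, Nat.cast_sub (by omega : 1 ≤ N), Nat.cast_sub hKN,
        Nat.cast_one] at h
      rw [hc3]
      exact h
    have hprod : c3 * (N : ℝ) * ((N : ℝ) - 1) * K
        = (N.choose K : ℝ) * (K : ℝ) ^ 2 * ((N : ℝ) - K) := by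
      linear_combination ((N : ℝ) * K) * hr2 + ((K : ℝ) * ((N : ℝ) - K)) * hr1
    have hscalar : (N.choose K : ℝ)⁻¹ * (((K : ℝ)⁻¹) ^ 2 * c3 * (N : ℝ))
        = ((N : ℝ) - K) / ((N : ℝ) - 1) * (K : ℝ)⁻¹ := by
      field_simp
      linear_combination (mul_right_cancel₀ hKne (by linear_combination hprod) :
        c3 * (N : ℝ) * ((N : ℝ) - 1) = (N.choose K : ℝ) * K * ((N : ℝ) - K))
    -- conclude
    have hgoal : ∫ ω, ‖(N : ℝ)⁻¹ • ∑ k, v k ω.2 - (K : ℝ)⁻¹ • ∑ k ∈ S ω.1, v k ω.2‖ ^ 2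
        ∂(Ps.prod Pg) = ∫ ω, F (S ω.1) ω.2 ∂(Ps.prod Pg) := rfl
    rw [hgoal, hdecomp, ← Finset.mul_sum,
      ← integral_finset_sum P fun s _ => hintF s]
    calc (N.choose K : ℝ)⁻¹ * ∫ ωg, ∑ s ∈ P, F s ωg ∂Pg
        ≤ (N.choose K : ℝ)⁻¹ *
            ((((K : ℝ)⁻¹) ^ 2 * c3) * ((N : ℝ) * (4 * eta t ^ 2 * (Epo : ℝ) ^ 2 * H ^ 2))) :=
          mul_le_mul_of_nonneg_left hIF (by positivity)
      _ = ((N : ℝ) - K) / ((N : ℝ) - 1) * (4 / K) * (eta t) ^ 2 * (Epo : ℝ) ^ 2 * H ^ 2 := by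
          linear_combination (4 * eta t ^ 2 * (Epo : ℝ) ^ 2 * H ^ 2) * hscalar
end

section
/- (One-round recursion with uplink noise) Under the stated smoothness, strong convexity, unbiasedness, bounded-variance and bounded-gradient assumptions, with non-increasing learning rates satisfying η_t ≤ 2η_{t+E} and η_t ≤ 1/(4L): if step t+1 is a communication step with full participation, so that p̄_{t+1} = v̄_{t+1} + (1/N)Σ_{k=1}^N n_{t+1}^k where the uplink noise satisfies E[n_{t+1}^k] = 0, E‖(1/N)Σ_k n_{t+1}^k‖² = dσ²_{t+1}/N² (σ²_{t+1} = Σ_k σ²_{t+1,k}), and is independent of v̄_{t+1}, then E‖p̄_{t+1} − w*‖² ≤ (1 − η_t μ)·E‖p̄_t − w*‖² + dσ²_{t+1}/N² + η_t²·( Σ_{k=1}^N δ_k²/N² + 6LΓ + 8(E−1)²H² ). -/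
open MeasureTheory ProbabilityTheory Finset
open scoped RealInnerProductSpace


section Helpers
variable {α : Type*}

lemma memL2_integrable_inner {α : Type*} {m0 : MeasurableSpace α} {μ : Measure α} {E : Type*} [NormedAddCommGroup E] [InnerProductSpace ℝ E]
    {f g : α → E} (hf : MemLp f 2 μ) (hg : MemLp g 2 μ) :
    Integrable (fun ω => ⟪f ω, g ω⟫) μ := by
  have h := L2.integrable_inner (𝕜 := ℝ) (hf.toLp f) (hg.toLp g)
  refine h.congr ?_
  filter_upwards [hf.coeFn_toLp, hg.coeFn_toLp] with ω h1 h2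
  rw [h1, h2]

lemma condexp_clm_comp {α : Type*} {m m0 : MeasurableSpace α} {μ : Measure α} {E F' : Type*}
    [NormedAddCommGroup E] [NormedSpace ℝ E] [CompleteSpace E]
    [NormedAddCommGroup F'] [NormedSpace ℝ F'] [CompleteSpace F']
    (hm : m ≤ m0) [SigmaFinite (μ.trim hm)] (T : E →L[ℝ] F') {f : α → E}
    (hf : Integrable f μ) :
    μ[fun ω => T (f ω)|m] =ᵐ[μ] fun ω => T ((μ[f|m]) ω) := by
  symm
  refine ae_eq_condExp_of_forall_setIntegral_eq hm (T.integrable_comp hf) ?_ ?_ ?_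
  · intro s _ _
    exact (T.integrable_comp integrable_condExp).integrableOn
  · intro s hs _
    rw [T.integral_comp_comm integrable_condExp.integrableOn,
      T.integral_comp_comm hf.integrableOn, setIntegral_condExp hm hf hs]
  · exact (T.continuous.comp_stronglyMeasurable stronglyMeasurable_condExp).aestronglyMeasurable

end Helpers


lemma coord_memL2 {α : Type*} {m0 : MeasurableSpace α} {μ : Measure α} {d : ℕ}
    {f : α → EuclideanSpace ℝ (Fin d)} (hf : MemLp f 2 μ) (i : Fin d) :
    MemLp (fun ω => f ω i) 2 μ := by
  have h := hf.const_inner (𝕜 := ℝ) (EuclideanSpace.single i (1 : ℝ))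
  simpa [EuclideanSpace.inner_single_left] using h

lemma coord_sm {α : Type*} {m : MeasurableSpace α} {d : ℕ}
    {f : α → EuclideanSpace ℝ (Fin d)} (hf : StronglyMeasurable[m] f) (i : Fin d) :
    StronglyMeasurable[m] (fun ω => f ω i) :=
  ((EuclideanSpace.proj i : EuclideanSpace ℝ (Fin d) →L[ℝ] ℝ).continuous).comp_stronglyMeasurable hf

lemma inner_eq_sum_coord {d : ℕ} (x y : EuclideanSpace ℝ (Fin d)) :
    ⟪x, y⟫ = ∑ i, x i * y i := by
  simp [PiLp.inner_apply, RCLike.inner_apply, mul_comm]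

lemma integral_inner_condexp {α : Type*} {m m0 : MeasurableSpace α} {μ : Measure α}
    [IsProbabilityMeasure μ] (hm : m ≤ m0) {d : ℕ}
    {h f g : α → EuclideanSpace ℝ (Fin d)}
    (hh : StronglyMeasurable[m] h) (hhL2 : MemLp h 2 μ)
    (hfL2 : MemLp f 2 μ) (hgL2 : MemLp g 2 μ)
    (hc : μ[f|m] =ᵐ[μ] g) :
    ∫ ω, ⟪h ω, f ω⟫ ∂μ = ∫ ω, ⟪h ω, g ω⟫ ∂μ := by
  have key : ∀ i : Fin d, ∫ ω, h ω i * f ω i ∂μ = ∫ ω, h ω i * g ω i ∂μ := by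
    intro i
    have hint : Integrable (fun ω => h ω i * f ω i) μ := by
      simpa [RCLike.inner_apply, mul_comm] using
        memL2_integrable_inner (coord_memL2 hhL2 i) (coord_memL2 hfL2 i)
    have hfi : Integrable (fun ω => f ω i) μ := (coord_memL2 hfL2 i).integrable one_le_two
    have hmul := condExp_mul_of_stronglyMeasurable_left (μ := μ) (coord_sm hh i)
      (by exact hint) hfi
    have hci : μ[fun ω => f ω i|m] =ᵐ[μ] fun ω => g ω i := by
      have h1 := condexp_clm_comp (μ := μ) hm (EuclideanSpace.proj (𝕜 := ℝ) i)
        (hfL2.integrable one_le_two)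
      have h2 : (fun ω => (EuclideanSpace.proj (𝕜 := ℝ) i) ((μ[f|m]) ω)) =ᵐ[μ]
          fun ω => g ω i := by
        filter_upwards [hc] with ω hω
        simp [hω]
      exact h1.trans h2
    calc ∫ ω, h ω i * f ω i ∂μ = ∫ ω, (μ[fun ω => h ω i * f ω i|m]) ω ∂μ :=
          (integral_condExp hm).symm
      _ = ∫ ω, h ω i * (μ[fun ω => f ω i|m]) ω ∂μ := by
          refine integral_congr_ae ?_
          filter_upwards [hmul] with ω hω
          exact hω
      _ = ∫ ω, h ω i * g ω i ∂μ := by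
          refine integral_congr_ae ?_
          filter_upwards [hci] with ω hω
          rw [hω]
  have expand : ∀ (u v : α → EuclideanSpace ℝ (Fin d)), MemLp u 2 μ → MemLp v 2 μ →
      ∫ ω, ⟪u ω, v ω⟫ ∂μ = ∑ i, ∫ ω, u ω i * v ω i ∂μ := by
    intro u v hu hv
    rw [← integral_finset_sum]
    · exact integral_congr_ae (Filter.Eventually.of_forall fun ω => inner_eq_sum_coord _ _)
    · intro i _
      simpa [RCLike.inner_apply, mul_comm] using
        memL2_integrable_inner (coord_memL2 hu i) (coord_memL2 hv i)
  rw [expand h f hhL2 hfL2, expand h g hhL2 hgL2]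
  exact Finset.sum_congr rfl fun i _ => key i

lemma integral_inner_indep_zero {α : Type*} {m0 : MeasurableSpace α} {μ : Measure α}
    [IsProbabilityMeasure μ] {d : ℕ} {A B : α → EuclideanSpace ℝ (Fin d)}
    (hAB : IndepFun A B μ) (hA : MemLp A 2 μ) (hB : MemLp B 2 μ)
    (hBmean : ∫ ω, B ω ∂μ = 0) :
    ∫ ω, ⟪A ω, B ω⟫ ∂μ = 0 := by
  have expand : ∫ ω, ⟪A ω, B ω⟫ ∂μ = ∑ i, ∫ ω, A ω i * B ω i ∂μ := by
    rw [← integral_finset_sum]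
    · exact integral_congr_ae (Filter.Eventually.of_forall fun ω => inner_eq_sum_coord _ _)
    · intro i _
      simpa [RCLike.inner_apply, mul_comm] using
        memL2_integrable_inner (coord_memL2 hA i) (coord_memL2 hB i)
  rw [expand]
  refine Finset.sum_eq_zero fun i _ => ?_
  have hproj : Measurable fun x : EuclideanSpace ℝ (Fin d) => x i :=
    (EuclideanSpace.proj (𝕜 := ℝ) i).continuous.measurable
  have hiAB : IndepFun (fun ω => A ω i) (fun ω => B ω i) μ := hAB.comp hproj hproj
  have hmul : ∫ ω, A ω i * B ω i ∂μ = (∫ ω, A ω i ∂μ) * ∫ ω, B ω i ∂μ := by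
    have h := hiAB.integral_mul_eq_mul_integral ((coord_memL2 hA i).integrable one_le_two).1
      ((coord_memL2 hB i).integrable one_le_two).1
    simpa [Pi.mul_apply] using h
  rw [hmul]
  have hBi : ∫ ω, B ω i ∂μ = 0 := by
    have h := (EuclideanSpace.proj (𝕜 := ℝ) i).integral_comp_comm (hB.integrable one_le_two)
    simpa [hBmean] using h
  rw [hBi, mul_zero]

section Det
variable {E : Type*} [NormedAddCommGroup E] [InnerProductSpace ℝ E]




lemma grad_sq_le {F : E → ℝ} {g : E → E} {L Fstar : ℝ} (hL : 0 < L)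
    (hs : ∀ v w, F v ≤ F w + ⟪v - w, g w⟫ + L / 2 * ‖v - w‖ ^ 2)
    (hstar : ∀ v, Fstar ≤ F v) (p : E) :
    ‖g p‖ ^ 2 ≤ 2 * L * (F p - Fstar) := by
  have h := hs (p - L⁻¹ • g p) p
  have hz : p - L⁻¹ • g p - p = -(L⁻¹ • g p) := by abel
  have hi : ⟪p - L⁻¹ • g p - p, g p⟫ = -(L⁻¹ * ‖g p‖ ^ 2) := by
    rw [hz, inner_neg_left, real_inner_smul_left, real_inner_self_eq_norm_sq]
  have hn : ‖p - L⁻¹ • g p - p‖ ^ 2 = L⁻¹ ^ 2 * ‖g p‖ ^ 2 := by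
    rw [hz, norm_neg, norm_smul, mul_pow, Real.norm_eq_abs, sq_abs]
  rw [hi, hn] at h
  have h2 := hstar (p - L⁻¹ • g p)
  have hcoef : L / 2 * (L⁻¹ ^ 2 * ‖g p‖ ^ 2) = 1 / (2 * L) * ‖g p‖ ^ 2 := by
    field_simp
  rw [hcoef] at h
  have hc2 : L⁻¹ * ‖g p‖ ^ 2 - 1 / (2 * L) * ‖g p‖ ^ 2 = 1 / (2 * L) * ‖g p‖ ^ 2 := by
    field_simp; ring
  have h3 : 1 / (2 * L) * ‖g p‖ ^ 2 ≤ F p - Fstar := by linarith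
  have h4 := mul_le_mul_of_nonneg_left h3 (by positivity : (0:ℝ) ≤ 2 * L)
  have h5 : 2 * L * (1 / (2 * L) * ‖g p‖ ^ 2) = ‖g p‖ ^ 2 := by field_simp
  linarith






lemma grad_lipschitz {F : E → ℝ} {g : E → E} {L mu : ℝ} (hL : 0 < L) (hmu : 0 ≤ mu)
    (hs : ∀ v w, F v ≤ F w + ⟪v - w, g w⟫ + L / 2 * ‖v - w‖ ^ 2)
    (hc : ∀ v w, F v ≥ F w + ⟪v - w, g w⟫ + mu / 2 * ‖v - w‖ ^ 2)
    (v w : E) : ‖g v - g w‖ ≤ L * ‖v - w‖ := by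
  have key : ∀ a b : E, 1 / (2 * L) * ‖g a - g b‖ ^ 2 ≤ F a - F b - ⟪a - b, g b⟫ := by
    intro a b
    set u := g a - g b with hu
    have hz : a - L⁻¹ • u - a = -(L⁻¹ • u) := by abel
    have hi1 : ⟪a - L⁻¹ • u - a, g a⟫ = -(L⁻¹ * ⟪u, g a⟫) := by
      rw [hz, inner_neg_left, real_inner_smul_left]
    have hn : ‖a - L⁻¹ • u - a‖ ^ 2 = L⁻¹ ^ 2 * ‖u‖ ^ 2 := by
      rw [hz, norm_neg, norm_smul, mul_pow, Real.norm_eq_abs, sq_abs]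
    have hi2 : ⟪a - L⁻¹ • u - b, g b⟫ = ⟪a - b, g b⟫ - L⁻¹ * ⟪u, g b⟫ := by
      rw [sub_right_comm, inner_sub_left, real_inner_smul_left]
    have h1 : F b + (⟪a - b, g b⟫ - L⁻¹ * ⟪u, g b⟫) ≤ F (a - L⁻¹ • u) := by
      have h := hc (a - L⁻¹ • u) b
      rw [hi2] at h
      nlinarith [sq_nonneg ‖a - L⁻¹ • u - b‖, hmu]
    have h2 := hs (a - L⁻¹ • u) a
    rw [hi1, hn] at h2
    have hcoef : L / 2 * (L⁻¹ ^ 2 * ‖u‖ ^ 2) = 1 / (2 * L) * ‖u‖ ^ 2 := by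
      field_simp
    rw [hcoef] at h2
    have hiu : L⁻¹ * ⟪u, g a⟫ - L⁻¹ * ⟪u, g b⟫ = L⁻¹ * ‖u‖ ^ 2 := by
      rw [← mul_sub, ← inner_sub_right, ← hu, real_inner_self_eq_norm_sq]
    have hc2 : L⁻¹ * ‖u‖ ^ 2 - 1 / (2 * L) * ‖u‖ ^ 2 = 1 / (2 * L) * ‖u‖ ^ 2 := by
      field_simp; ring
    linarith
  have k1 := key v w
  have k2 := key w v
  have hrev : ‖g w - g v‖ = ‖g v - g w‖ := norm_sub_rev _ _
  rw [hrev] at k2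
  have hsum : 1 / L * ‖g v - g w‖ ^ 2 ≤ ⟪v - w, g v - g w⟫ := by
    have hwv : ⟪w - v, g v⟫ = -⟪v - w, g v⟫ := by
      rw [show w - v = -(v - w) by abel, inner_neg_left]
    have hsplit : ⟪v - w, g v - g w⟫ = ⟪v - w, g v⟫ - ⟪v - w, g w⟫ := inner_sub_right _ _ _
    have hLc : 1 / (2 * L) * ‖g v - g w‖ ^ 2 + 1 / (2 * L) * ‖g v - g w‖ ^ 2
        = 1 / L * ‖g v - g w‖ ^ 2 := by field_simp; ring
    linarith
  have hcs : ⟪v - w, g v - g w⟫ ≤ ‖v - w‖ * ‖g v - g w‖ := real_inner_le_norm _ _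
  rcases eq_or_lt_of_le (norm_nonneg (g v - g w)) with h0 | h0
  · rw [← h0]; positivity
  · have h6 : 1 / L * ‖g v - g w‖ ^ 2 ≤ ‖v - w‖ * ‖g v - g w‖ := le_trans hsum hcs
    have h7 : ‖g v - g w‖ * ‖g v - g w‖ ≤ (L * ‖v - w‖) * ‖g v - g w‖ := by
      have := mul_le_mul_of_nonneg_left h6 hL.le
      have hc3 : L * (1 / L * ‖g v - g w‖ ^ 2) = ‖g v - g w‖ * ‖g v - g w‖ := by
        field_simp
      nlinarith
    exact le_of_mul_le_mul_right h7 h0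








lemma contraction {N : ℕ} (hN : 0 < N) {L mu e Gam : ℝ} (hL : 0 < L) (hmu : 0 < mu)
    (F : Fin N → E → ℝ) (gF : Fin N → E → E) (wstar : E) (Fkstar : Fin N → ℝ)
    (hsmooth : ∀ k v w, F k v ≤ F k w + ⟪v - w, gF k w⟫ + L / 2 * ‖v - w‖ ^ 2)
    (hconvex : ∀ k v w, F k v ≥ F k w + ⟪v - w, gF k w⟫ + mu / 2 * ‖v - w‖ ^ 2)
    (hwstar : ∀ v, (N : ℝ)⁻¹ * ∑ k, F k wstar ≤ (N : ℝ)⁻¹ * ∑ k, F k v)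
    (hFkstar : ∀ k v, Fkstar k ≤ F k v)
    (hGam : Gam = (N : ℝ)⁻¹ * ∑ k, F k wstar - (N : ℝ)⁻¹ * ∑ k, Fkstar k)
    (he0 : 0 ≤ e) (heL : e ≤ 1 / (4 * L)) (p : E) :
    ‖p - wstar - e • ((N : ℝ)⁻¹ • ∑ k, gF k p)‖ ^ 2
      ≤ (1 - e * mu) * ‖p - wstar‖ ^ 2 + 6 * L * e ^ 2 * Gam := by
  have hNR : (0:ℝ) < (N : ℝ) := by exact_mod_cast hN
  set x := p - wstar with hx
  set g := (N : ℝ)⁻¹ • ∑ k, gF k p with hg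
  have hexp : ‖x - e • g‖ ^ 2 = ‖x‖ ^ 2 - 2 * (e * ⟪x, g⟫) + e ^ 2 * ‖g‖ ^ 2 := by
    rw [norm_sub_sq_real, real_inner_smul_right, norm_smul, mul_pow, Real.norm_eq_abs, sq_abs]
  -- inner product lower bound
  have hxg : ⟪x, g⟫ = (N : ℝ)⁻¹ * ∑ k, ⟪x, gF k p⟫ := by
    rw [hg, real_inner_smul_right, inner_sum]
  have hper : ∀ k, F k p - F k wstar + mu / 2 * ‖x‖ ^ 2 ≤ ⟪x, gF k p⟫ := by
    intro k
    have h := hconvex k wstar p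
    have h1 : ⟪wstar - p, gF k p⟫ = -⟪x, gF k p⟫ := by
      rw [show wstar - p = -x by rw [hx]; abel, inner_neg_left]
    have h2 : ‖wstar - p‖ = ‖x‖ := by rw [hx, norm_sub_rev]
    rw [h1, h2] at h
    linarith
  have hsum := Finset.sum_le_sum (fun k (_ : k ∈ Finset.univ) => hper k)
  rw [Finset.sum_add_distrib, Finset.sum_sub_distrib, Finset.sum_const, card_univ,
    Fintype.card_fin, nsmul_eq_mul] at hsum
  have hip : (N : ℝ)⁻¹ * (∑ k, F k p - ∑ k, F k wstar) + mu / 2 * ‖x‖ ^ 2 ≤ ⟪x, g⟫ := by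
    rw [hxg]
    have := mul_le_mul_of_nonneg_left hsum (by positivity : (0:ℝ) ≤ (N : ℝ)⁻¹)
    have hNN : (N : ℝ)⁻¹ * ((N : ℝ) * (mu / 2 * ‖x‖ ^ 2)) = mu / 2 * ‖x‖ ^ 2 := by
      field_simp
    rw [mul_add, hNN] at this
    linarith
  -- gradient norm bound
  have hgk : ∀ k, ‖gF k p‖ ^ 2 ≤ 2 * L * (F k p - Fkstar k) := fun k =>
    grad_sq_le hL (hsmooth k) (hFkstar k) p
  have hg2 : ‖g‖ ^ 2 ≤ (N : ℝ)⁻¹ * ∑ k, ‖gF k p‖ ^ 2 := by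
    have h1 : ‖g‖ ≤ (N : ℝ)⁻¹ * ∑ k, ‖gF k p‖ := by
      rw [hg, norm_smul, Real.norm_eq_abs, abs_of_nonneg (by positivity)]
      exact mul_le_mul_of_nonneg_left (norm_sum_le _ _) (by positivity)
    have h2 : (∑ k, ‖gF k p‖) ^ 2 ≤ (N : ℝ) * ∑ k, ‖gF k p‖ ^ 2 := by
      have := sq_sum_le_card_mul_sum_sq (s := (Finset.univ : Finset (Fin N)))
        (f := fun k => ‖gF k p‖)
      simpa [card_univ] using this
    have h3 : ‖g‖ ^ 2 ≤ ((N : ℝ)⁻¹ * ∑ k, ‖gF k p‖) ^ 2 := by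
      have := mul_self_le_mul_self (norm_nonneg g) h1
      simpa [pow_two] using this
    calc ‖g‖ ^ 2 ≤ ((N : ℝ)⁻¹ * ∑ k, ‖gF k p‖) ^ 2 := h3
      _ = (N : ℝ)⁻¹ ^ 2 * (∑ k, ‖gF k p‖) ^ 2 := by ring
      _ ≤ (N : ℝ)⁻¹ ^ 2 * ((N : ℝ) * ∑ k, ‖gF k p‖ ^ 2) := by
          exact mul_le_mul_of_nonneg_left h2 (by positivity)
      _ = (N : ℝ)⁻¹ * ∑ k, ‖gF k p‖ ^ 2 := by
          field_simp
  have hg3 : ‖g‖ ^ 2 ≤ 2 * L * ((N : ℝ)⁻¹ * (∑ k, F k p - ∑ k, Fkstar k)) := by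
    have h1 : ∑ k, ‖gF k p‖ ^ 2 ≤ ∑ k, 2 * L * (F k p - Fkstar k) :=
      Finset.sum_le_sum fun k _ => hgk k
    have h2 : ∑ k, 2 * L * (F k p - Fkstar k) = 2 * L * (∑ k, F k p - ∑ k, Fkstar k) := by
      rw [← Finset.mul_sum, Finset.sum_sub_distrib]
    calc ‖g‖ ^ 2 ≤ (N : ℝ)⁻¹ * ∑ k, ‖gF k p‖ ^ 2 := hg2
      _ ≤ (N : ℝ)⁻¹ * (2 * L * (∑ k, F k p - ∑ k, Fkstar k)) := by
          rw [← h2]; exact mul_le_mul_of_nonneg_left h1 (by positivity)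
      _ = 2 * L * ((N : ℝ)⁻¹ * (∑ k, F k p - ∑ k, Fkstar k)) := by ring
  -- scalar bookkeeping
  set D := (N : ℝ)⁻¹ * (∑ k, F k p - ∑ k, F k wstar) with hD
  have hD0 : 0 ≤ D := by
    have := hwstar p
    rw [hD, mul_sub]
    linarith
  have hGam0 : 0 ≤ Gam := by
    rw [hGam]
    have h := Finset.sum_le_sum fun k (_ : k ∈ Finset.univ) => hFkstar k wstar
    have := mul_le_mul_of_nonneg_left h (by positivity : (0:ℝ) ≤ (N : ℝ)⁻¹)
    linarith
  have hsplit : (N : ℝ)⁻¹ * (∑ k, F k p - ∑ k, Fkstar k) = D + Gam := by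
    rw [hD, hGam]; ring
  rw [hsplit] at hg3
  have heL' : e * L ≤ 1 / 4 := by
    have := mul_le_mul_of_nonneg_right heL hL.le
    rw [div_mul_eq_mul_div, one_mul] at this
    calc e * L ≤ L / (4 * L) := this
      _ = 1 / 4 := by field_simp
  rw [hexp]
  nlinarith [mul_le_mul_of_nonneg_left hip (by linarith : (0:ℝ) ≤ 2 * e),
    mul_le_mul_of_nonneg_left hg3 (sq_nonneg e),
    mul_nonneg he0 hD0, mul_nonneg (mul_nonneg hL.le (sq_nonneg e)) hGam0,
    mul_nonneg (mul_nonneg (mul_nonneg he0 he0) hL.le) hD0,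
    mul_nonneg he0 (mul_nonneg he0 (mul_nonneg hL.le hGam0))]



end Det

set_option maxHeartbeats 1000000 in
/-- **One-round recursion with uplink noise.**
There are `N` clients with `L`-smooth, `μ`-strongly convex local losses `F_k` (gradients
`gF k`), global objective minimized at `w*`, non-IID gap `Γ`.  The clients start the
round from the common global model `p̄_t` (no downlink noise at step `t`) and perform
one local SGD step with learning rate `η_t` using conditionally unbiased stochastic
gradients with variance at most `δ_k²` and second moment at most `H²`, uncorrelated
across clients; the learning rates are nonnegative, non-increasing, with `η ≤ 2η_{·+E}`
and `η ≤ 1/(4L)`.  The uploads are corrupted by zero-mean uplink noises `n_{t+1}^k`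
satisfying `E‖(1/N)∑ₖ n_{t+1}^k‖² = dσ²_{t+1}/N²` (`σ²_{t+1} = ∑ₖ σ²_{t+1,k}`),
mutually independent and independent of `v̄_{t+1}`, so that
`p̄_{t+1} = v̄_{t+1} + (1/N)∑ₖ n_{t+1}^k`.  Then
`E‖p̄_{t+1} − w*‖² ≤ (1 − η_tμ) E‖p̄_t − w*‖² + dσ²_{t+1}/N²
  + η_t² (∑ₖ δ_k²/N² + 6LΓ + 8(E−1)²H²)`. -/
theorem one_round_recursion_uplink_noise
    (d N Epo : ℕ) (hN : 0 < N) (hEpo : 1 ≤ Epo)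
    (L mu H Gam : ℝ) (hL : 0 < L) (hmu : 0 < mu) (hmuL : mu ≤ L)
    (delta sigma : Fin N → ℝ)
    (F : Fin N → EuclideanSpace ℝ (Fin d) → ℝ)
    (gF : Fin N → EuclideanSpace ℝ (Fin d) → EuclideanSpace ℝ (Fin d))
    (wstar : EuclideanSpace ℝ (Fin d)) (Fkstar : Fin N → ℝ)
    (hsmooth : ∀ k v w, F k v ≤ F k w + ⟪v - w, gF k w⟫ + L / 2 * ‖v - w‖ ^ 2)
    (hconvex : ∀ k v w, F k v ≥ F k w + ⟪v - w, gF k w⟫ + mu / 2 * ‖v - w‖ ^ 2)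
    (hwstar : ∀ v, (N : ℝ)⁻¹ * ∑ k, F k wstar ≤ (N : ℝ)⁻¹ * ∑ k, F k v)
    (hFkstar : ∀ k v, Fkstar k ≤ F k v)
    (hGam : Gam = (N : ℝ)⁻¹ * ∑ k, F k wstar - (N : ℝ)⁻¹ * ∑ k, Fkstar k)
    (eta : ℕ → ℝ) (hetamono : Antitone eta) (hetapos : ∀ τ, 0 ≤ eta τ)
    (heta2 : ∀ τ, eta τ ≤ 2 * eta (τ + Epo)) (hetaL : ∀ τ, eta τ ≤ 1 / (4 * L))
    (t : ℕ)
    (Ω : Type) [mΩ : MeasurableSpace Ω] (P : Measure Ω) [IsProbabilityMeasure P]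
    (pbar : Ω → EuclideanSpace ℝ (Fin d))
    (n : Fin N → Ω → EuclideanSpace ℝ (Fin d))
    (wloc gs : Fin N → Ω → EuclideanSpace ℝ (Fin d))
    (vbar : Ω → EuclideanSpace ℝ (Fin d))
    (hwloc : ∀ k, wloc k = pbar)
    (hvbar : vbar = fun ω => (N : ℝ)⁻¹ • ∑ k, (wloc k ω - eta t • gs k ω))
    (hmemp : MemLp pbar 2 P) (hmemn : ∀ k, MemLp (n k) 2 P)
    (hmemg : ∀ k, MemLp (gs k) 2 P)
    -- uplink noise statistics
    (hnmean : ∀ k, ∫ ω, n k ω ∂P = 0)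
    (hnindep : iIndepFun n P)
    (hnv : IndepFun (fun ω (k : Fin N) => n k ω) vbar P)
    (hnvaragg : ∫ ω, ‖(N : ℝ)⁻¹ • ∑ k, n k ω‖ ^ 2 ∂P
      = (d : ℝ) * (∑ k, (sigma k) ^ 2) / (N : ℝ) ^ 2)
    -- stochastic gradients
    (mH : MeasurableSpace Ω) (hmH : mH ≤ mΩ)
    (hadapt : ∀ k, StronglyMeasurable[mH] (wloc k))
    (hunbiased : ∀ k, P[gs k|mH] =ᵐ[P] fun ω => gF k (wloc k ω))
    (hvar : ∀ k, ∫ ω, ‖gs k ω - gF k (wloc k ω)‖ ^ 2 ∂P ≤ (delta k) ^ 2)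
    (hbddgrad : ∀ k, ∫ ω, ‖gs k ω‖ ^ 2 ∂P ≤ H ^ 2)
    (hgcross : ∀ j k, j ≠ k →
      ∫ ω, ⟪gs j ω - gF j (wloc j ω), gs k ω - gF k (wloc k ω)⟫ ∂P = 0) :
    ∫ ω, ‖vbar ω + (N : ℝ)⁻¹ • ∑ k, n k ω - wstar‖ ^ 2 ∂P
      ≤ (1 - eta t * mu) * ∫ ω, ‖pbar ω - wstar‖ ^ 2 ∂P
        + (d : ℝ) * (∑ k, (sigma k) ^ 2) / (N : ℝ) ^ 2
        + (eta t) ^ 2 * (∑ k, (delta k) ^ 2 / (N : ℝ) ^ 2 + 6 * L * Gam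
            + 8 * ((Epo : ℝ) - 1) ^ 2 * H ^ 2) := by
  classical
  have ⟨k0⟩ : Nonempty (Fin N) := ⟨⟨0, hN⟩⟩
  set e := eta t with he
  have he0 : (0:ℝ) ≤ e := hetapos t
  have heL : e ≤ 1 / (4 * L) := hetaL t
  have hNR : (0:ℝ) < (N : ℝ) := by exact_mod_cast hN
  -- abbreviations (plain defs, used only inside haves)
  -- step 1 : algebraic form of vbar
  have hv1 : ∀ ω, vbar ω = pbar ω - e • ((N : ℝ)⁻¹ • ∑ k, gs k ω) := by
    intro ω
    rw [hvbar]
    simp only [hwloc]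
    rw [Finset.sum_sub_distrib, Finset.sum_const, card_univ, Fintype.card_fin, smul_sub]
    congr 1
    · rw [← Nat.cast_smul_eq_nsmul ℝ, smul_smul, inv_mul_cancel₀ hNR.ne', one_smul]
    · rw [← Finset.smul_sum, smul_comm]
  have hA : ∀ ω, vbar ω - wstar
      = (pbar ω - wstar - e • ((N : ℝ)⁻¹ • ∑ k, gF k (pbar ω)))
        - e • ((N : ℝ)⁻¹ • ∑ k, (gs k ω - gF k (pbar ω))) := by
    intro ω
    rw [hv1 ω]
    have hsum : (∑ k, gs k ω) = (∑ k, gF k (pbar ω)) + ∑ k, (gs k ω - gF k (pbar ω)) := by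
      rw [← Finset.sum_add_distrib]
      exact Finset.sum_congr rfl fun k _ => by abel
    rw [hsum, smul_add, smul_add]
    abel
  -- measure-theoretic preliminaries
  haveI : IsFiniteMeasure (P.trim hmH) := isFiniteMeasure_trim hmH
  have hpbar_sm : StronglyMeasurable[mH] pbar := hwloc k0 ▸ hadapt k0
  have hlip : ∀ k (v w : EuclideanSpace ℝ (Fin d)), ‖gF k v - gF k w‖ ≤ L * ‖v - w‖ :=
    fun k => grad_lipschitz hL hmu.le (hsmooth k) (hconvex k)
  have hcont : ∀ k, Continuous (gF k) := by
    intro k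
    have : LipschitzWith (Real.toNNReal L) (gF k) := by
      apply LipschitzWith.of_dist_le_mul
      intro v w
      rw [dist_eq_norm, dist_eq_norm]
      calc ‖gF k v - gF k w‖ ≤ L * ‖v - w‖ := hlip k v w
        _ ≤ (Real.toNNReal L) * ‖v - w‖ := by
            refine mul_le_mul_of_nonneg_right ?_ (norm_nonneg _)
            rw [Real.coe_toNNReal L hL.le]
    exact this.continuous
  have hmemX : MemLp (fun ω => pbar ω - wstar) 2 P := hmemp.sub (memLp_const wstar)
  have hmemG : ∀ k, MemLp (fun ω => gF k (pbar ω)) 2 P := by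
    intro k
    have haesm : AEStronglyMeasurable[mΩ] (fun ω => gF k (pbar ω)) P :=
      (hcont k).comp_aestronglyMeasurable hmemp.aestronglyMeasurable
    have hbnd : MemLp (fun ω => ‖gF k wstar‖ + L * ‖pbar ω - wstar‖) 2 P :=
      by have h2 := (memLp_const (μ := P) (p := 2) ‖gF k wstar‖).add (hmemX.norm.const_mul L); exact h2
    refine hbnd.of_le haesm ?_
    refine Filter.Eventually.of_forall fun ω => ?_
    have h1 : ‖gF k (pbar ω)‖ ≤ ‖gF k wstar‖ + ‖gF k (pbar ω) - gF k wstar‖ :=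
      norm_le_insert' _ _
    have h2 : ‖gF k (pbar ω) - gF k wstar‖ ≤ L * ‖pbar ω - wstar‖ := hlip k _ _
    have h3 : (0:ℝ) ≤ ‖gF k wstar‖ + L * ‖pbar ω - wstar‖ := by positivity
    rw [Real.norm_eq_abs, abs_of_nonneg h3]
    linarith
  have hmemGb : MemLp (fun ω => (N : ℝ)⁻¹ • ∑ k, gF k (pbar ω)) 2 P := by
    exact ((memLp_finset_sum Finset.univ fun k _ => hmemG k).const_smul ((N:ℝ)⁻¹) : _)
  have hmemDk : ∀ k, MemLp (fun ω => gs k ω - gF k (pbar ω)) 2 P :=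
    fun k => (hmemg k).sub (hmemG k)
  have hmemDb : MemLp (fun ω => (N : ℝ)⁻¹ • ∑ k, (gs k ω - gF k (pbar ω))) 2 P := by
    exact ((memLp_finset_sum Finset.univ fun k _ => hmemDk k).const_smul ((N:ℝ)⁻¹) : _)
  have hmemA : MemLp (fun ω => pbar ω - wstar
      - e • ((N : ℝ)⁻¹ • ∑ k, gF k (pbar ω))) 2 P :=
    hmemX.sub (hmemGb.const_smul e)
  have hmemV : MemLp (fun ω => vbar ω - wstar) 2 P := by
    have : (fun ω => vbar ω - wstar) = fun ω =>
        (pbar ω - wstar - e • ((N : ℝ)⁻¹ • ∑ k, gF k (pbar ω)))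
        - e • ((N : ℝ)⁻¹ • ∑ k, (gs k ω - gF k (pbar ω))) := funext hA
    rw [this]
    exact hmemA.sub (hmemDb.const_smul e)
  have hmemNb : MemLp (fun ω => (N : ℝ)⁻¹ • ∑ k, n k ω) 2 P := by
    exact ((memLp_finset_sum Finset.univ fun k _ => hmemn k).const_smul ((N:ℝ)⁻¹) : _)
  -- step 2 : noise decomposition
  have hNbmean : ∫ ω, (N : ℝ)⁻¹ • ∑ k, n k ω ∂P = 0 := by
    rw [integral_smul, integral_finset_sum _ fun k _ => (hmemn k).integrable one_le_two]
    rw [Finset.sum_congr rfl fun k _ => hnmean k]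
    simp
  have hind : IndepFun (fun ω => vbar ω - wstar) (fun ω => (N : ℝ)⁻¹ • ∑ k, n k ω) P := by
    have hψ : Measurable fun v : EuclideanSpace ℝ (Fin d) => v - wstar :=
      measurable_id.sub measurable_const
    have hφ : Measurable fun v : Fin N → EuclideanSpace ℝ (Fin d) =>
        (N : ℝ)⁻¹ • ∑ k, v k := by
      apply Continuous.measurable
      exact (continuous_finset_sum _ fun k _ =>
        (continuous_apply k : Continuous fun v : Fin N → EuclideanSpace ℝ (Fin d) => v k)).const_smul ((N : ℝ)⁻¹)
    exact hnv.symm.comp hψ hφ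
  have hcross1 : ∫ ω, ⟪vbar ω - wstar, (N : ℝ)⁻¹ • ∑ k, n k ω⟫ ∂P = 0 :=
    integral_inner_indep_zero hind hmemV hmemNb hNbmean
  have hi1 : Integrable (fun ω => ‖vbar ω - wstar‖ ^ 2) P :=
    (memLp_two_iff_integrable_sq_norm hmemV.aestronglyMeasurable).mp hmemV
  have hi2 : Integrable (fun ω => ⟪vbar ω - wstar, (N : ℝ)⁻¹ • ∑ k, n k ω⟫) P :=
    memL2_integrable_inner hmemV hmemNb
  have hi3 : Integrable (fun ω => ‖(N : ℝ)⁻¹ • ∑ k, n k ω‖ ^ 2) P :=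
    (memLp_two_iff_integrable_sq_norm hmemNb.aestronglyMeasurable).mp hmemNb
  have hdec1 : ∫ ω, ‖vbar ω + (N : ℝ)⁻¹ • ∑ k, n k ω - wstar‖ ^ 2 ∂P
      = ∫ ω, ‖vbar ω - wstar‖ ^ 2 ∂P
        + ((∫ ω, 2 * ⟪vbar ω - wstar, (N : ℝ)⁻¹ • ∑ k, n k ω⟫ ∂P)
          + ∫ ω, ‖(N : ℝ)⁻¹ • ∑ k, n k ω‖ ^ 2 ∂P) := by
    have hi2' : Integrable (fun ω => 2 * ⟪vbar ω - wstar, (N : ℝ)⁻¹ • ∑ k, n k ω⟫) P := by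
      exact hi2.const_mul 2
    have hi23 : Integrable (fun ω => 2 * ⟪vbar ω - wstar, (N : ℝ)⁻¹ • ∑ k, n k ω⟫
        + ‖(N : ℝ)⁻¹ • ∑ k, n k ω‖ ^ 2) P := by exact hi2'.add hi3
    have hcongr : ∫ ω, ‖vbar ω + (N : ℝ)⁻¹ • ∑ k, n k ω - wstar‖ ^ 2 ∂P
        = ∫ ω, (‖vbar ω - wstar‖ ^ 2
          + (2 * ⟪vbar ω - wstar, (N : ℝ)⁻¹ • ∑ k, n k ω⟫
            + ‖(N : ℝ)⁻¹ • ∑ k, n k ω‖ ^ 2)) ∂P := by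
      refine integral_congr_ae (Filter.Eventually.of_forall fun ω => ?_)
      beta_reduce
      have hvec : vbar ω + (N : ℝ)⁻¹ • ∑ k, n k ω - wstar
          = (vbar ω - wstar) + (N : ℝ)⁻¹ • ∑ k, n k ω := by abel
      rw [hvec, norm_add_sq_real]
      ring
    rw [hcongr, integral_add hi1 hi23, integral_add hi2' hi3]
  -- step 3 : SGD cross term vanishes
  have hsum_sm : StronglyMeasurable[mH] (fun ω => ∑ k, gF k (pbar ω)) :=
    Finset.stronglyMeasurable_fun_sum _ fun k _ => (hcont k).comp_stronglyMeasurable hpbar_sm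
  have hGb_sm : StronglyMeasurable[mH] (fun ω => (N : ℝ)⁻¹ • ∑ k, gF k (pbar ω)) := by
    exact hsum_sm.const_smul ((N : ℝ)⁻¹)
  have hA_sm : StronglyMeasurable[mH] (fun ω => pbar ω - wstar
      - e • ((N : ℝ)⁻¹ • ∑ k, gF k (pbar ω))) := by
    exact (hpbar_sm.sub stronglyMeasurable_const).sub (hGb_sm.const_smul e)
  have hcondk : ∀ k, P[gs k|mH] =ᵐ[P] fun ω => gF k (pbar ω) := by
    intro k
    have h := hunbiased k
    rwa [hwloc k] at h
  have hck : ∀ k, ∫ ω, ⟪pbar ω - wstar - e • ((N : ℝ)⁻¹ • ∑ j, gF j (pbar ω)), gs k ω⟫ ∂P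
      = ∫ ω, ⟪pbar ω - wstar - e • ((N : ℝ)⁻¹ • ∑ j, gF j (pbar ω)), gF k (pbar ω)⟫ ∂P :=
    fun k => integral_inner_condexp hmH hA_sm hmemA (hmemg k) (hmemG k) (hcondk k)
  have hcross2 : ∫ ω, ⟪pbar ω - wstar - e • ((N : ℝ)⁻¹ • ∑ j, gF j (pbar ω)),
      (N : ℝ)⁻¹ • ∑ k, (gs k ω - gF k (pbar ω))⟫ ∂P = 0 := by
    have hiab : ∀ k : Fin N, Integrable (fun ω =>
        ⟪pbar ω - wstar - e • ((N : ℝ)⁻¹ • ∑ j, gF j (pbar ω)), gs k ω⟫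
        - ⟪pbar ω - wstar - e • ((N : ℝ)⁻¹ • ∑ j, gF j (pbar ω)), gF k (pbar ω)⟫) P :=
      fun k => (memL2_integrable_inner hmemA (hmemg k)).sub
        (memL2_integrable_inner hmemA (hmemG k))
    have hptw : ∀ ω, ⟪pbar ω - wstar - e • ((N : ℝ)⁻¹ • ∑ j, gF j (pbar ω)),
        (N : ℝ)⁻¹ • ∑ k, (gs k ω - gF k (pbar ω))⟫
        = (N : ℝ)⁻¹ * ∑ k, (⟪pbar ω - wstar - e • ((N : ℝ)⁻¹ • ∑ j, gF j (pbar ω)), gs k ω⟫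
          - ⟪pbar ω - wstar - e • ((N : ℝ)⁻¹ • ∑ j, gF j (pbar ω)), gF k (pbar ω)⟫) := by
      intro ω
      rw [real_inner_smul_right, inner_sum]
      congr 1
      exact Finset.sum_congr rfl fun k _ => inner_sub_right _ _ _
    rw [integral_congr_ae (Filter.Eventually.of_forall hptw), integral_const_mul,
      integral_finset_sum _ fun k _ => hiab k]
    have : ∀ k : Fin N, k ∈ Finset.univ → (∫ ω,
        (⟪pbar ω - wstar - e • ((N : ℝ)⁻¹ • ∑ j, gF j (pbar ω)), gs k ω⟫
        - ⟪pbar ω - wstar - e • ((N : ℝ)⁻¹ • ∑ j, gF j (pbar ω)), gF k (pbar ω)⟫) ∂P) = 0 := by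
      intro k _
      rw [integral_sub (memL2_integrable_inner hmemA (hmemg k))
        (memL2_integrable_inner hmemA (hmemG k)), hck k, sub_self]
    rw [Finset.sum_congr rfl this, Finset.sum_const, smul_zero, mul_zero]
  -- step 4 : second decomposition
  have hi4 : Integrable (fun ω => ‖pbar ω - wstar
      - e • ((N : ℝ)⁻¹ • ∑ k, gF k (pbar ω))‖ ^ 2) P :=
    (memLp_two_iff_integrable_sq_norm hmemA.aestronglyMeasurable).mp hmemA
  have hi5 : Integrable (fun ω => ⟪pbar ω - wstar - e • ((N : ℝ)⁻¹ • ∑ j, gF j (pbar ω)),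
      (N : ℝ)⁻¹ • ∑ k, (gs k ω - gF k (pbar ω))⟫) P :=
    memL2_integrable_inner hmemA hmemDb
  have hi6 : Integrable (fun ω => ‖(N : ℝ)⁻¹ • ∑ k, (gs k ω - gF k (pbar ω))‖ ^ 2) P :=
    (memLp_two_iff_integrable_sq_norm hmemDb.aestronglyMeasurable).mp hmemDb
  have hdec2 : ∫ ω, ‖vbar ω - wstar‖ ^ 2 ∂P
      = ∫ ω, ‖pbar ω - wstar - e • ((N : ℝ)⁻¹ • ∑ k, gF k (pbar ω))‖ ^ 2 ∂P
        - 2 * e * ∫ ω, ⟪pbar ω - wstar - e • ((N : ℝ)⁻¹ • ∑ j, gF j (pbar ω)),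
            (N : ℝ)⁻¹ • ∑ k, (gs k ω - gF k (pbar ω))⟫ ∂P
        + e ^ 2 * ∫ ω, ‖(N : ℝ)⁻¹ • ∑ k, (gs k ω - gF k (pbar ω))‖ ^ 2 ∂P := by
    have hptw : ∀ ω, ‖vbar ω - wstar‖ ^ 2
        = ‖pbar ω - wstar - e • ((N : ℝ)⁻¹ • ∑ k, gF k (pbar ω))‖ ^ 2
          - 2 * e * ⟪pbar ω - wstar - e • ((N : ℝ)⁻¹ • ∑ j, gF j (pbar ω)),
            (N : ℝ)⁻¹ • ∑ k, (gs k ω - gF k (pbar ω))⟫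
          + e ^ 2 * ‖(N : ℝ)⁻¹ • ∑ k, (gs k ω - gF k (pbar ω))‖ ^ 2 := by
      intro ω
      rw [hA ω, norm_sub_sq_real, real_inner_smul_right, norm_smul, Real.norm_eq_abs,
        mul_pow, sq_abs]
      ring
    have h25 : Integrable (fun ω => 2 * e
        * ⟪pbar ω - wstar - e • ((N : ℝ)⁻¹ • ∑ j, gF j (pbar ω)),
          (N : ℝ)⁻¹ • ∑ k, (gs k ω - gF k (pbar ω))⟫) P := by exact hi5.const_mul (2 * e)
    have h26 : Integrable (fun ω => e ^ 2
        * ‖(N : ℝ)⁻¹ • ∑ k, (gs k ω - gF k (pbar ω))‖ ^ 2) P := by exact hi6.const_mul (e ^ 2)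
    have h456 : Integrable (fun ω =>
        ‖pbar ω - wstar - e • ((N : ℝ)⁻¹ • ∑ k, gF k (pbar ω))‖ ^ 2
        - 2 * e * ⟪pbar ω - wstar - e • ((N : ℝ)⁻¹ • ∑ j, gF j (pbar ω)),
          (N : ℝ)⁻¹ • ∑ k, (gs k ω - gF k (pbar ω))⟫) P := by exact hi4.sub h25
    rw [integral_congr_ae (Filter.Eventually.of_forall hptw),
      integral_add h456 h26, integral_sub hi4 h25, integral_const_mul,
      integral_const_mul]
  -- step 5 : contraction bound
  have hcontr : ∫ ω, ‖pbar ω - wstar - e • ((N : ℝ)⁻¹ • ∑ k, gF k (pbar ω))‖ ^ 2 ∂P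
      ≤ (1 - e * mu) * ∫ ω, ‖pbar ω - wstar‖ ^ 2 ∂P + 6 * L * e ^ 2 * Gam := by
    have hptw : ∀ ω, ‖pbar ω - wstar - e • ((N : ℝ)⁻¹ • ∑ k, gF k (pbar ω))‖ ^ 2
        ≤ (1 - e * mu) * ‖pbar ω - wstar‖ ^ 2 + 6 * L * e ^ 2 * Gam := fun ω =>
      contraction hN hL hmu F gF wstar Fkstar hsmooth hconvex hwstar hFkstar hGam
        he0 heL (pbar ω)
    have hiX : Integrable (fun ω => ‖pbar ω - wstar‖ ^ 2) P :=
      (memLp_two_iff_integrable_sq_norm hmemX.aestronglyMeasurable).mp hmemX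
    have hiX1 : Integrable (fun ω => (1 - e * mu) * ‖pbar ω - wstar‖ ^ 2) P := by
      exact hiX.const_mul _
    have hint2 : Integrable (fun ω => (1 - e * mu) * ‖pbar ω - wstar‖ ^ 2
        + 6 * L * e ^ 2 * Gam) P := by exact hiX1.add (integrable_const _)
    calc ∫ ω, ‖pbar ω - wstar - e • ((N : ℝ)⁻¹ • ∑ k, gF k (pbar ω))‖ ^ 2 ∂P
        ≤ ∫ ω, ((1 - e * mu) * ‖pbar ω - wstar‖ ^ 2 + 6 * L * e ^ 2 * Gam) ∂P :=
          integral_mono hi4 hint2 hptw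
      _ = (1 - e * mu) * ∫ ω, ‖pbar ω - wstar‖ ^ 2 ∂P + 6 * L * e ^ 2 * Gam := by
          rw [integral_add hiX1 (integrable_const _), integral_const_mul, integral_const,
            probReal_univ]
          simp
  -- step 6 : variance bound
  have hvarDb : ∫ ω, ‖(N : ℝ)⁻¹ • ∑ k, (gs k ω - gF k (pbar ω))‖ ^ 2 ∂P
      ≤ ∑ k, (delta k) ^ 2 / (N : ℝ) ^ 2 := by
    have hiDD : ∀ j k : Fin N, Integrable
        (fun ω => ⟪gs j ω - gF j (pbar ω), gs k ω - gF k (pbar ω)⟫) P :=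
      fun j k => memL2_integrable_inner (hmemDk j) (hmemDk k)
    have hptw : ∀ ω, ‖(N : ℝ)⁻¹ • ∑ k, (gs k ω - gF k (pbar ω))‖ ^ 2
        = ((N : ℝ)⁻¹) ^ 2 * ∑ j, ∑ k,
          ⟪gs j ω - gF j (pbar ω), gs k ω - gF k (pbar ω)⟫ := by
      intro ω
      rw [norm_smul, Real.norm_eq_abs, mul_pow, sq_abs, ← real_inner_self_eq_norm_sq,
        sum_inner]
      congr 1
      exact Finset.sum_congr rfl fun j _ => inner_sum _ _ _
    have h1 : ∫ ω, ‖(N : ℝ)⁻¹ • ∑ k, (gs k ω - gF k (pbar ω))‖ ^ 2 ∂P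
        = ((N : ℝ)⁻¹) ^ 2 * ∑ j, ∑ k,
          ∫ ω, ⟪gs j ω - gF j (pbar ω), gs k ω - gF k (pbar ω)⟫ ∂P := by
      rw [integral_congr_ae (Filter.Eventually.of_forall hptw), integral_const_mul,
        integral_finset_sum _ fun j _ => integrable_finset_sum _ fun k _ => hiDD j k]
      congr 1
      exact Finset.sum_congr rfl fun j _ => integral_finset_sum _ fun k _ => hiDD j k
    have hgcross' : ∀ j k : Fin N, j ≠ k →
        ∫ ω, ⟪gs j ω - gF j (pbar ω), gs k ω - gF k (pbar ω)⟫ ∂P = 0 := by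
      intro j k hjk
      have h := hgcross j k hjk
      simpa [hwloc] using h
    have hvar' : ∀ k : Fin N, ∫ ω, ⟪gs k ω - gF k (pbar ω), gs k ω - gF k (pbar ω)⟫ ∂P
        ≤ (delta k) ^ 2 := by
      intro k
      have h := hvar k
      rw [hwloc k] at h
      calc ∫ ω, ⟪gs k ω - gF k (pbar ω), gs k ω - gF k (pbar ω)⟫ ∂P
          = ∫ ω, ‖gs k ω - gF k (pbar ω)‖ ^ 2 ∂P :=
            integral_congr_ae (Filter.Eventually.of_forall fun ω =>
              real_inner_self_eq_norm_sq _)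
        _ ≤ (delta k) ^ 2 := h
    have h2 : ∑ j, ∑ k, ∫ ω, ⟪gs j ω - gF j (pbar ω), gs k ω - gF k (pbar ω)⟫ ∂P
        ≤ ∑ k, (delta k) ^ 2 := by
      have hdiag : ∀ j : Fin N, j ∈ Finset.univ → (∑ k,
          ∫ ω, ⟪gs j ω - gF j (pbar ω), gs k ω - gF k (pbar ω)⟫ ∂P)
          = ∫ ω, ⟪gs j ω - gF j (pbar ω), gs j ω - gF j (pbar ω)⟫ ∂P := by
        intro j _
        refine Finset.sum_eq_single_of_mem j (Finset.mem_univ j) ?_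
        intro k _ hkj
        exact hgcross' j k (Ne.symm hkj)
      rw [Finset.sum_congr rfl hdiag]
      exact Finset.sum_le_sum fun j _ => hvar' j
    rw [h1]
    have h3 : ((N : ℝ)⁻¹) ^ 2 * ∑ k, (delta k) ^ 2 = ∑ k, (delta k) ^ 2 / (N : ℝ) ^ 2 := by
      rw [← Finset.sum_div, div_eq_mul_inv, ← inv_pow, mul_comm]
    rw [← h3]
    exact mul_le_mul_of_nonneg_left h2 (by positivity)
  -- step 7 : combine
  have hc1 : ∫ ω, 2 * ⟪vbar ω - wstar, (N : ℝ)⁻¹ • ∑ k, n k ω⟫ ∂P = 0 := by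
    rw [integral_const_mul, hcross1, mul_zero]
  rw [hdec1, hc1, hdec2, hcross2, hnvaragg, zero_add]
  have hDb2 : e ^ 2 * ∫ ω, ‖(N : ℝ)⁻¹ • ∑ k, (gs k ω - gF k (pbar ω))‖ ^ 2 ∂P
      ≤ e ^ 2 * ∑ k, (delta k) ^ 2 / (N : ℝ) ^ 2 :=
    mul_le_mul_of_nonneg_left hvarDb (sq_nonneg e)
  have hslack : (0:ℝ) ≤ e ^ 2 * (8 * ((Epo : ℝ) - 1) ^ 2 * H ^ 2) := by positivity
  nlinarith [hcontr, hDb2, hslack]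
end
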